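/- The matrix-valued potential coefficients Π_n = 2Γ(ν+2)(2ν+3)_{n-1}/(√π n!(ν+2)Γ(ν+1/2)) · diag((ν+1)/(ν+n+1), ν(ν+n+1)/((ν+n)(ν+n+2))) for n ≥ 1 satisfy the recursion Π_n = (C_{n,1}*)^{-1} Π_{n-1} A_{n-1,1}, with Π₀ = (Γ(ν+1)/(√π(ν+2)Γ(ν+1/2))) diag(1, (ν+1)/(ν+2)). -/

import Mathlib

open Real

/-- Pochhammer (rising factorial) symbol `(a)_n = a(a+1)⋯(a+n-1)`. -/
noncomputable def poch (a : ℝ) (n : ℕ) : ℝ := ∏ i ∈ Finset.range n, (a + i)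

/-- The matrix-valued potential coefficients `Π_n` (diagonal, given by their two
diagonal entries `i = 0, 1`). -/
noncomputable def Pot (ν : ℝ) (n : ℕ) (i : Fin 2) : ℝ :=
  if n = 0 then
    Real.Gamma (ν + 1) / (Real.sqrt π * (ν + 2) * Real.Gamma (ν + 1 / 2)) *
      (if i = 0 then 1 else (ν + 1) / (ν + 2))
  else
    2 * Real.Gamma (ν + 2) * poch (2 * ν + 3) (n - 1) /
        (Real.sqrt π * (Nat.factorial n) * (ν + 2) * Real.Gamma (ν + 1 / 2)) *
      (if i = 0 then (ν + 1) / (ν + n + 1) else ν * (ν + n + 1) / ((ν + n) * (ν + n + 2)))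

/-- Diagonal entries of `A_{n,1}`. -/
noncomputable def Acoef (ν : ℝ) (n : ℕ) (i : Fin 2) : ℝ :=
  if i = 0 then (2 * ν + n + 2) / (4 * (ν + n + 2))
  else ((n : ℝ) + ν) * (2 * ν + n + 2) / (4 * (ν + n + 1) ^ 2)

/-- Diagonal entries of `C_{n,1}`. -/
noncomputable def Ccoef (ν : ℝ) (n : ℕ) (i : Fin 2) : ℝ :=
  if i = 0 then (n : ℝ) / (4 * (ν + n)) else (n : ℝ) * (ν + n + 2) / (4 * (ν + n + 1) ^ 2)

lemma poch_pos {a : ℝ} (ha : 0 < a) (n : ℕ) : 0 < poch a n := by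
  unfold poch
  exact Finset.prod_pos fun i _ => by positivity

/-- the matrix-valued potential coefficients satisfy the recursion
`Π_n = (C_{n,1}*)⁻¹ Π_{n-1} A_{n-1,1}` (all matrices being diagonal, stated entrywise). -/
theorem matrix_potential_recursion (ν : ℝ) (hν : 0 < ν) (n : ℕ) (hn : 1 ≤ n) (i : Fin 2) :
    Pot ν n i = (Ccoef ν n i)⁻¹ * Pot ν (n - 1) i * Acoef ν (n - 1) i := by
  have hπ : Real.sqrt π ≠ 0 := ne_of_gt (Real.sqrt_pos.mpr Real.pi_pos)
  have hG2 : Real.Gamma (ν + 1 / 2) ≠ 0 := (Real.Gamma_pos_of_pos (by linarith)).ne'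
  have hG1 : Real.Gamma (ν + 1) ≠ 0 := (Real.Gamma_pos_of_pos (by linarith)).ne'
  have hGam2 : Real.Gamma (ν + 2) = (ν + 1) * Real.Gamma (ν + 1) := by
    have h := Real.Gamma_add_one (s := ν + 1) (by positivity)
    rw [show ν + 2 = ν + 1 + 1 by ring, h]
  obtain ⟨m, rfl⟩ : ∃ m, n = m + 1 := ⟨n - 1, (Nat.succ_pred_eq_of_pos hn).symm⟩
  match m with
  | 0 =>
    fin_cases i <;>
    · simp only [Pot, Acoef, Ccoef, poch, hGam2, if_true, if_false, Finset.range_zero,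
        Finset.prod_empty]
      norm_num
      field_simp
      ring
  | k+1 =>
    have hpoch : poch (2 * ν + 3) (k + 1) = poch (2 * ν + 3) k * (2 * ν + 3 + k) := by
      unfold poch; rw [Finset.prod_range_succ]
    have hpne : poch (2 * ν + 3) k ≠ 0 := (poch_pos (by linarith) k).ne'
    have hfac : (Nat.factorial (k + 2) : ℝ) = (k + 2) * Nat.factorial (k + 1) := by
      push_cast [Nat.factorial_succ]; ring
    have hfne : (Nat.factorial (k + 1) : ℝ) ≠ 0 := by positivity
    have h1 : ν + (k + 1) ≠ 0 := by positivity
    have h2 : ν + (k + 2) ≠ 0 := by positivity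
    fin_cases i <;>
    · simp only [Pot, Acoef, Ccoef, if_true, if_false, Nat.add_sub_cancel]
      norm_num [hpoch, hfac]
      field_simp
      ring
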